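/- For a ring R the following are equivalent: (1) R is left semiartinian, left local, and a left V-ring (every simple left module is injective); (2) for every nonzero left R-module M, every preradical σ on R-Mod and every nonzero submodule N ≤ M, σ(N) = 0 implies σ(M) = 0; (3) R is semisimple with all simple modules isomorphic (semisimple homogeneous). -/

import Mathlib

universe u

/-- A preradical on `R`-Mod: a subfunctor of the identity functor. -/
structure Preradical (R : Type u) [Ring R] : Type (u + 1) where
  rad : ∀ (M : Type u) [AddCommGroup M] [Module R M], Submodule R M
  map_le : ∀ {M N : Type u} [AddCommGroup M] [Module R M] [AddCommGroup N] [Module R N]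
    (f : M →ₗ[R] N), (rad M).map f ≤ rad N

namespace Stmt19Aux

variable {R : Type u} [Ring R]

lemma simple_ne_bot {M : Type u} [AddCommGroup M] [Module R M] {W : Submodule R M}
    (h : IsSimpleModule R W) : W ≠ ⊥ :=
  (isSimpleModule_iff_isAtom.mp h).1

lemma rad_eq_bot_of_inj (σ : Preradical R) {M N : Type u} [AddCommGroup M] [Module R M]
    [AddCommGroup N] [Module R N] (f : M →ₗ[R] N) (hf : Function.Injective f)
    (h : σ.rad N = ⊥) : σ.rad M = ⊥ := by
  have hle := σ.map_le f
  rw [h, le_bot_iff] at hle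
  exact Submodule.map_injective_of_injective hf (by rw [hle, Submodule.map_bot])

/-- The core contradiction: there cannot exist a left ideal `m` that is essential,
together with a nonzero left ideal `T` that is simultaneously a direct summand
(witnessed by the projection `π`) and isomorphic to `R ⧸ m`. -/
lemma core (m T : Submodule R R)
    (hess : ∀ x : R, x ≠ 0 → ∃ s : R, s * x ∈ m ∧ s * x ≠ 0)
    (hTne : T ≠ ⊥) (π : R →ₗ[R] T) (hπ : ∀ t : T, π (t : R) = t)
    (θ : (R ⧸ m) ≃ₗ[R] T) : False := by
  obtain ⟨t, htT, ht0⟩ := T.ne_bot_iff.mp hTne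
  obtain ⟨r₀, hr₀⟩ := Submodule.Quotient.mk_surjective m (θ.symm (π 1))
  obtain ⟨u, huT, hu0, hum⟩ : ∃ u, u ∈ T ∧ u ≠ 0 ∧ u * r₀ ∈ m := by
    by_cases h : t * r₀ ∈ m
    · exact ⟨t, htT, ht0, h⟩
    · have hx : t * r₀ ≠ 0 := fun h0 => h (h0 ▸ m.zero_mem)
      obtain ⟨s, hsm, hs0⟩ := hess _ hx
      refine ⟨s * t, ?_, ?_, ?_⟩
      · simpa [smul_eq_mul] using T.smul_mem s htT
      · intro h0
        exact hs0 (by rw [← mul_assoc, h0, zero_mul])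
      · rw [mul_assoc]; exact hsm
  have key : π u = 0 := by
    have h1 : π u = u • π 1 := by rw [← map_smul, smul_eq_mul, mul_one]
    have h2 : (u • π 1 : T) = θ (u • θ.symm (π 1)) := by
      rw [map_smul, θ.apply_symm_apply]
    have h3 : Submodule.Quotient.mk (p := m) (u • r₀) = 0 :=
      (Submodule.Quotient.mk_eq_zero m).mpr (by simpa [smul_eq_mul] using hum)
    rw [h1, h2, ← hr₀, ← Submodule.Quotient.mk_smul, h3, map_zero]
  have h4 : (⟨u, huT⟩ : T) = 0 := (hπ ⟨u, huT⟩).symm.trans key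
  exact hu0 (congrArg Subtype.val h4)

/-- Over a left semiartinian ring, any left ideal containing all simple left ideals
is essential. -/
lemma ess_of_contains_simples
    (hsa : ∀ (M : Type u) [AddCommGroup M] [Module R M], Nontrivial M →
      ∃ S : Submodule R M, IsSimpleModule R S)
    {m : Submodule R R} (hm : ∀ W : Submodule R R, IsSimpleModule R W → W ≤ m)
    (x : R) (hx : x ≠ 0) : ∃ s : R, s * x ∈ m ∧ s * x ≠ 0 := by
  set N : Submodule R R := Submodule.span R {x} with hNdef
  have hNne : N ≠ ⊥ := fun h => hx (Submodule.span_singleton_eq_bot.mp (hNdef ▸ h))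
  have hNnt : Nontrivial N := Submodule.nontrivial_iff_ne_bot.mpr hNne
  obtain ⟨S, hS⟩ := hsa N hNnt
  haveI := hS
  have hW : IsSimpleModule R (S.map N.subtype) :=
    IsSimpleModule.congr (Submodule.equivMapOfInjective N.subtype N.injective_subtype S).symm
  obtain ⟨w, hwW, hw0⟩ := (S.map N.subtype).ne_bot_iff.mp (simple_ne_bot hW)
  have hwN : w ∈ N := Submodule.map_subtype_le N S hwW
  obtain ⟨s, hs⟩ := Submodule.mem_span_singleton.mp hwN
  refine ⟨s, ?_, ?_⟩
  · rw [← smul_eq_mul, hs]; exact hm _ hW hwW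
  · rw [← smul_eq_mul, hs]; exact hw0

/-- The trace preradical of a fixed module `A`. -/
noncomputable def trace (R : Type u) [Ring R] (A : Type u) [AddCommGroup A] [Module R A] :
    Preradical R where
  rad M _ _ := ⨆ f : A →ₗ[R] M, LinearMap.range f
  map_le {M N} _ _ _ _ g := by
    rw [Submodule.map_iSup]
    refine iSup_le fun f => ?_
    rw [← LinearMap.range_comp]
    exact le_iSup (fun h : A →ₗ[R] N => LinearMap.range h) (g ∘ₗ f)

/-- The Jacobson-radical preradical. -/
def radJ (R : Type u) [Ring R] : Preradical R where
  rad M _ _ := sInf {m : Submodule R M | IsCoatom m}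
  map_le {M N} _ _ _ _ g := by
    refine le_sInf fun m hm => ?_
    rw [Submodule.map_le_iff_le_comap]
    by_cases hc : m.comap g = ⊤
    · rw [hc]; exact le_top
    · refine sInf_le ⟨hc, fun b hb => ?_⟩
      have h1 : ¬ b.map g ≤ m := fun hle => hb.2 (Submodule.map_le_iff_le_comap.mp hle)
      have hlt : m < m ⊔ b.map g :=
        lt_of_le_of_ne le_sup_left (fun he => h1 (le_sup_right.trans he.ge))
      have h2 : m ⊔ b.map g = ⊤ := hm.2 _ hlt
      rw [eq_top_iff]
      intro x _
      have hgx : g x ∈ m ⊔ b.map g := h2.symm ▸ Submodule.mem_top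
      obtain ⟨y, hy, z, hz, hyz⟩ := Submodule.mem_sup.mp hgx
      obtain ⟨p, hp, rfl⟩ := hz
      have hxp : x - p ∈ m.comap g := by
        rw [Submodule.mem_comap, map_sub]
        have : g x - g p = y := by rw [← hyz]; abel
        rw [this]; exact hy
      have hxb : x - p ∈ b := hb.1 hxp
      have : x = (x - p) + p := (sub_add_cancel x p).symm
      rw [this]
      exact b.add_mem hxb hp

/-- Shared endgame: over a left semiartinian ring there is no simple left ideal `T`
which is a direct summand while also being the image of a surjection from `R`
whose kernel contains all simple left ideals. -/
lemma no_splitting_surj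
    (hsa : ∀ (M : Type u) [AddCommGroup M] [Module R M], Nontrivial M →
      ∃ S : Submodule R M, IsSimpleModule R S)
    (T : Submodule R R) (hT : IsSimpleModule R T)
    (π : R →ₗ[R] T) (hπ : ∀ t : T, π (t : R) = t)
    (Ψ : R →ₗ[R] T) (hΨ : Function.Surjective Ψ)
    (hker : ∀ W : Submodule R R, IsSimpleModule R W → W ≤ LinearMap.ker Ψ) : False :=
  core (LinearMap.ker Ψ) T (fun x hx => ess_of_contains_simples hsa hker x hx)
    (simple_ne_bot hT) π hπ (Ψ.quotKerEquivOfSurjective hΨ)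

lemma semisimple_of_subsingleton (h : Subsingleton R) : IsSemisimpleRing R := by
  haveI := h
  refine @IsSemisimpleModule.mk _ _ _ _ _ ⟨fun a => ⟨⊥, disjoint_bot_right, ?_⟩⟩
  rw [codisjoint_iff, sup_bot_eq, Subsingleton.elim a ⊤]

end Stmt19Aux

open Stmt19Aux in
/-- For a ring `R`, the following are equivalent: (1) `R` is left semiartinian,
left local, and a left `V`-ring; (2) every nonzero left `R`-module is first with
respect to every preradical; (3) `R` is semisimple with all simple modules
isomorphic (semisimple homogeneous). -/
theorem stmt19 (R : Type u) [Ring R] :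
    List.TFAE
      [(∀ (M : Type u) [AddCommGroup M] [Module R M], Nontrivial M →
          ∃ S : Submodule R M, IsSimpleModule R S) ∧
        (∀ (S T : Type u) [AddCommGroup S] [Module R S] [AddCommGroup T] [Module R T],
          IsSimpleModule R S → IsSimpleModule R T → Nonempty (S ≃ₗ[R] T)) ∧
        (∀ (S : Type u) [AddCommGroup S] [Module R S], IsSimpleModule R S →
          Module.Injective R S),
       ∀ (M : Type u) [AddCommGroup M] [Module R M], Nontrivial M →
         ∀ (σ : Preradical R) (N : Submodule R M), N ≠ ⊥ → σ.rad N = ⊥ → σ.rad M = ⊥,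
       IsSemisimpleRing R ∧
        (∀ (S T : Type u) [AddCommGroup S] [Module R S] [AddCommGroup T] [Module R T],
          IsSimpleModule R S → IsSimpleModule R T → Nonempty (S ≃ₗ[R] T))] := by
  tfae_have 3 → 1 := by
    rintro ⟨hss, hhom⟩
    haveI := hss
    refine ⟨?_, hhom, ?_⟩
    · intro M _ _ hM
      haveI := hM
      exact IsSemisimpleModule.exists_simple_submodule R M
    · intro S _ _ hS
      refine Module.Baer.injective ?_
      intro I g
      obtain ⟨J, hJ⟩ := exists_isCompl I
      refine ⟨g ∘ₗ Submodule.linearProjOfIsCompl I J hJ, fun x hx => ?_⟩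
      simp only [LinearMap.comp_apply]
      congr 1
      exact Submodule.linearProjOfIsCompl_apply_left hJ ⟨x, hx⟩
  tfae_have 3 → 2 := by
    rintro ⟨hss, hhom⟩
    haveI := hss
    intro M _ _ hM σ N hN hσN
    obtain ⟨W, hWN, hW⟩ := (IsSemisimpleModule.eq_bot_or_exists_simple_le N).resolve_left hN
    haveI := hW
    have hradW : σ.rad W = ⊥ :=
      rad_eq_bot_of_inj σ (Submodule.inclusion hWN) (Submodule.inclusion_injective hWN) hσN
    have hsimp : ∀ (X : Type u) [AddCommGroup X] [Module R X], IsSimpleModule R X →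
        σ.rad X = ⊥ := by
      intro X _ _ hX
      obtain ⟨e⟩ := hhom X W hX hW
      exact rad_eq_bot_of_inj σ e.toLinearMap e.injective hradW
    by_contra hrad
    obtain ⟨V, hVle, hV⟩ := (IsSemisimpleModule.eq_bot_or_exists_simple_le (σ.rad M)).resolve_left
      hrad
    obtain ⟨C, hC⟩ := exists_isCompl V
    set p := Submodule.linearProjOfIsCompl V C hC with hp
    have hmap := σ.map_le p
    rw [hsimp V hV, le_bot_iff] at hmap
    obtain ⟨v, hvV, hv0⟩ := V.ne_bot_iff.mp (simple_ne_bot hV)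
    have hpv : p v = 0 := by
      have hmem : p v ∈ (σ.rad M).map p := ⟨v, hVle hvV, rfl⟩
      rwa [hmap, Submodule.mem_bot] at hmem
    have hid := Submodule.linearProjOfIsCompl_apply_left hC ⟨v, hvV⟩
    have h4 : (⟨v, hvV⟩ : V) = 0 := hid.symm.trans hpv
    exact hv0 (congrArg Subtype.val h4)
  tfae_have 1 → 3 := by
    rintro ⟨hsa, hhom, hinj⟩
    refine ⟨?_, hhom⟩
    rcases subsingleton_or_nontrivial R with hR | hR
    · exact semisimple_of_subsingleton hR
    · refine IsSemisimpleModule.of_sSup_simples_eq_top ?_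
      by_contra hsoc
      set soc : Submodule R R := sSup {m : Submodule R R | IsSimpleModule R m} with hsocdef
      obtain ⟨T, hT⟩ := hsa R hR
      haveI := hT
      obtain ⟨π, hπ⟩ := (hinj T hT).out T.subtype T.injective_subtype LinearMap.id
      haveI : Nontrivial (R ⧸ soc) :=
        Submodule.Quotient.nontrivial_iff.mpr hsoc
      obtain ⟨W, hW⟩ := hsa (R ⧸ soc) inferInstance
      haveI := hW
      set K : Submodule R R := W.comap soc.mkQ with hKdef
      have hres : ∀ x ∈ K, soc.mkQ x ∈ W := fun x hx => hx
      set ψ' : K →ₗ[R] W := soc.mkQ.restrict hres with hψ'def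
      obtain ⟨e⟩ := hhom W T hW hT
      obtain ⟨Ψ, hΨ⟩ := (hinj T hT).out K.subtype K.injective_subtype (e.toLinearMap ∘ₗ ψ')
      refine no_splitting_surj hsa T hT π hπ Ψ ?_ ?_
      · intro t
        obtain ⟨x, hx⟩ := soc.mkQ_surjective ((e.symm t : W) : R ⧸ soc)
        have hxK : x ∈ K := by
          rw [hKdef, Submodule.mem_comap, hx]
          exact (e.symm t).2
        refine ⟨x, ?_⟩
        have h1 := hΨ ⟨x, hxK⟩
        have h2 : ψ' ⟨x, hxK⟩ = e.symm t := by
          apply Subtype.ext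
          rw [hψ'def, LinearMap.restrict_apply]
          exact hx
        calc Ψ x = (e.toLinearMap ∘ₗ ψ') ⟨x, hxK⟩ := h1
          _ = e (e.symm t) := by rw [LinearMap.comp_apply, h2]; rfl
          _ = t := e.apply_symm_apply t
      · intro W' hW'
        have hle : W' ≤ soc := le_sSup hW'
        intro x hx
        have hxsoc : x ∈ soc := hle hx
        have hxK : x ∈ K := by
          rw [hKdef, Submodule.mem_comap, Submodule.mkQ_apply,
            (Submodule.Quotient.mk_eq_zero soc).mpr hxsoc]
          exact W.zero_mem
        rw [LinearMap.mem_ker]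
        have h1 := hΨ ⟨x, hxK⟩
        have h2 : ψ' ⟨x, hxK⟩ = 0 := by
          apply Subtype.ext
          rw [hψ'def, LinearMap.restrict_apply]
          exact (Submodule.Quotient.mk_eq_zero soc).mpr hxsoc
        calc Ψ x = (e.toLinearMap ∘ₗ ψ') ⟨x, hxK⟩ := h1
          _ = 0 := by rw [LinearMap.comp_apply, h2, map_zero]
  tfae_have 2 → 3 := by
    intro h2
    have hhom : ∀ (S T : Type u) [AddCommGroup S] [Module R S] [AddCommGroup T] [Module R T],
        IsSimpleModule R S → IsSimpleModule R T → Nonempty (S ≃ₗ[R] T) := by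
      intro S T _ _ _ _ hS hT
      haveI := hS; haveI := hT
      by_contra hno
      have hzero : ∀ f : T →ₗ[R] S, f = 0 := by
        intro f
        by_contra hf
        exact hno ⟨(LinearEquiv.ofBijective f (f.bijective_of_ne_zero hf)).symm⟩
      haveI : Nontrivial S := IsSimpleModule.nontrivial R S
      haveI : Nontrivial T := IsSimpleModule.nontrivial R T
      set σ := trace R T with hσdef
      set N : Submodule R (S × T) := (⊤ : Submodule R S).prod ⊥ with hNdef
      have hN : N ≠ ⊥ := by
        obtain ⟨s, hs⟩ := exists_ne (0 : S)
        refine N.ne_bot_iff.mpr ⟨(s, 0), Submodule.mem_prod.mpr ⟨trivial, Submodule.zero_mem _⟩, ?_⟩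
        simp [Prod.ext_iff, hs]
      have hradN : σ.rad N = ⊥ := by
        show (⨆ f : T →ₗ[R] N, LinearMap.range f) = ⊥
        rw [iSup_eq_bot]
        intro f
        rw [LinearMap.range_eq_bot]
        apply LinearMap.ext
        intro x
        have h1 : ((f x : S × T)).1 = 0 := by
          have hz := LinearMap.congr_fun (hzero (LinearMap.fst R S T ∘ₗ N.subtype ∘ₗ f)) x
          simpa using hz
        have h2 : ((f x : S × T)).2 = 0 := (Submodule.mem_prod.mp (f x).2).2
        exact Subtype.ext (Prod.ext h1 h2)
      have hrad := h2 (S × T) inferInstance σ N hN hradN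
      have hle : LinearMap.range (LinearMap.inr R S T) ≤ σ.rad (S × T) :=
        le_iSup (fun f : T →ₗ[R] (S × T) => LinearMap.range f) (LinearMap.inr R S T)
      rw [hrad, le_bot_iff, LinearMap.range_eq_bot] at hle
      obtain ⟨t, ht⟩ := exists_ne (0 : T)
      exact ht (congrArg Prod.snd (LinearMap.congr_fun hle t))
    have hsa : ∀ (M : Type u) [AddCommGroup M] [Module R M], Nontrivial M →
        ∃ S : Submodule R M, IsSimpleModule R S := by
      intro M _ _ hM
      by_contra hns
      push_neg at hns
      haveI : Nontrivial R := by
        by_contra h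
        rw [not_nontrivial_iff_subsingleton] at h
        haveI := h
        haveI := Module.subsingleton R M
        exact not_subsingleton_iff_nontrivial.mpr hM inferInstance
      obtain ⟨mx, hmx⟩ := Ideal.exists_maximal R
      haveI hS : IsSimpleModule R (R ⧸ (mx : Submodule R R)) :=
        isSimpleModule_iff_isCoatom.mpr (Ideal.isMaximal_def.mp hmx)
      haveI : Nontrivial (R ⧸ (mx : Submodule R R)) :=
        IsSimpleModule.nontrivial R (R ⧸ (mx : Submodule R R))
      set Q := R ⧸ (mx : Submodule R R) with hQdef
      set σ := trace R Q with hσdef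
      set N : Submodule R (M × Q) := (⊤ : Submodule R M).prod ⊥ with hNdef
      have hNne : N ≠ ⊥ := by
        obtain ⟨x, hx⟩ := exists_ne (0 : M)
        refine N.ne_bot_iff.mpr ⟨(x, 0), Submodule.mem_prod.mpr ⟨trivial, Submodule.zero_mem _⟩, ?_⟩
        simp [Prod.ext_iff, hx]
      have hradN : σ.rad N = ⊥ := by
        show (⨆ f : Q →ₗ[R] N, LinearMap.range f) = ⊥
        rw [iSup_eq_bot]
        intro f
        rw [LinearMap.range_eq_bot]
        set g := LinearMap.fst R M Q ∘ₗ N.subtype ∘ₗ f with hgdef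
        have hg : g = 0 := by
          by_contra hg
          have hinj : Function.Injective g := g.injective_of_ne_zero hg
          exact hns _ (IsSimpleModule.congr (LinearEquiv.ofInjective g hinj).symm)
        apply LinearMap.ext
        intro x
        have h1 : ((f x : M × Q)).1 = 0 := by
          have hz := LinearMap.congr_fun hg x
          simpa [hgdef] using hz
        have h2 : ((f x : M × Q)).2 = 0 := (Submodule.mem_prod.mp (f x).2).2
        exact Subtype.ext (Prod.ext h1 h2)
      have hrad := h2 (M × Q) inferInstance σ N hNne hradN
      have hle : LinearMap.range (LinearMap.inr R M Q) ≤ σ.rad (M × Q) :=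
        le_iSup (fun f : Q →ₗ[R] (M × Q) => LinearMap.range f) (LinearMap.inr R M Q)
      rw [hrad, le_bot_iff, LinearMap.range_eq_bot] at hle
      obtain ⟨b, hb⟩ := exists_ne (0 : Q)
      exact hb (congrArg Prod.snd (LinearMap.congr_fun hle b))
    refine ⟨?_, hhom⟩
    rcases subsingleton_or_nontrivial R with hR | hR
    · exact semisimple_of_subsingleton hR
    · refine IsSemisimpleModule.of_sSup_simples_eq_top ?_
      by_contra hsoc
      set soc : Submodule R R := sSup {m : Submodule R R | IsSimpleModule R m} with hsocdef
      obtain ⟨T, hT⟩ := hsa R hR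
      haveI := hT
      -- The Jacobson radical of R is zero.
      have hradJ : (radJ R).rad R = ⊥ := by
        set N' : Submodule R (R × T) := LinearMap.range (LinearMap.inr R R T) with hN'def
        have hTequiv : T ≃ₗ[R] N' := LinearEquiv.ofInjective _ LinearMap.inr_injective
        haveI hN'simple : IsSimpleModule R N' := IsSimpleModule.congr hTequiv.symm
        have hN'ne : N' ≠ ⊥ := simple_ne_bot hN'simple
        have hradN' : (radJ R).rad N' = ⊥ := by
          have hco : IsCoatom (⊥ : Submodule R N') :=
            ⟨bot_ne_top, fun b hb => (eq_bot_or_eq_top b).resolve_left hb.ne'⟩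
          exact le_bot_iff.mp (sInf_le hco)
        have hrad := h2 (R × T) inferInstance (radJ R) N' hN'ne hradN'
        have hle := (radJ R).map_le (LinearMap.inl R R T)
        rw [hrad, le_bot_iff] at hle
        exact Submodule.map_injective_of_injective LinearMap.inl_injective
          (by rw [hle, Submodule.map_bot])
      -- T is a direct summand of R.
      obtain ⟨t₀, ht₀T, ht₀⟩ := T.ne_bot_iff.mp (simple_ne_bot hT)
      have hex : ∃ m' : Submodule R R, IsCoatom m' ∧ t₀ ∉ m' := by
        by_contra hcon
        push_neg at hcon
        have hmem : t₀ ∈ (radJ R).rad R := Submodule.mem_sInf.mpr (fun p hp => hcon p hp)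
        rw [hradJ, Submodule.mem_bot] at hmem
        exact ht₀ hmem
      obtain ⟨m', hm', ht₀m'⟩ := hex
      have hTnle : ¬ T ≤ m' := fun hle => ht₀m' (hle ht₀T)
      have hcompl : IsCompl T m' := by
        constructor
        · rw [disjoint_iff]
          by_cases h : T ⊓ m' = T
          · exact absurd (inf_eq_left.mp h) hTnle
          · exact (isSimpleModule_iff_isAtom.mp hT).2 _ (lt_of_le_of_ne inf_le_left h)
        · rw [codisjoint_iff, sup_comm]
          exact hm'.2 _ (lt_of_le_of_ne le_sup_left
            (fun he => hTnle (le_sup_right.trans he.ge)))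
      set π := Submodule.linearProjOfIsCompl T m' hcompl with hπdef
      -- A nonzero map from R ⧸ soc to a simple module.
      haveI : Nontrivial (R ⧸ soc) :=
        Submodule.Quotient.nontrivial_iff.mpr hsoc
      obtain ⟨W, hW⟩ := hsa (R ⧸ soc) inferInstance
      haveI := hW
      set τ := trace R (R ⧸ soc) with hτdef
      have hτB : τ.rad (R ⧸ soc) ≠ ⊥ := by
        intro h
        have hle : LinearMap.range (LinearMap.id : (R ⧸ soc) →ₗ[R] (R ⧸ soc)) ≤
            τ.rad (R ⧸ soc) :=
          le_iSup (fun f : (R ⧸ soc) →ₗ[R] (R ⧸ soc) => LinearMap.range f) LinearMap.id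
        rw [h, le_bot_iff, LinearMap.range_id] at hle
        obtain ⟨b, hb⟩ := exists_ne (0 : R ⧸ soc)
        exact hb ((Submodule.mem_bot R).mp (hle ▸ (Submodule.mem_top : b ∈ (⊤ : Submodule R (R ⧸ soc)))))
      have hτW : τ.rad W ≠ ⊥ := fun h =>
        hτB (h2 (R ⧸ soc) inferInstance τ W (simple_ne_bot hW) h)
      have hfex : ∃ f : (R ⧸ soc) →ₗ[R] W, f ≠ 0 := by
        by_contra hcon
        push_neg at hcon
        apply hτW
        show (⨆ f : (R ⧸ soc) →ₗ[R] W, LinearMap.range f) = ⊥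
        rw [iSup_eq_bot]
        intro f
        rw [LinearMap.range_eq_bot]
        exact hcon f
      obtain ⟨f, hf⟩ := hfex
      obtain ⟨e⟩ := hhom W T hW hT
      set Ψ : R →ₗ[R] T := e.toLinearMap ∘ₗ f ∘ₗ soc.mkQ with hΨdef
      refine no_splitting_surj hsa T hT π
        (fun t => Submodule.linearProjOfIsCompl_apply_left hcompl t) Ψ ?_ ?_
      · intro t
        have hfs : Function.Surjective f := f.surjective_of_ne_zero hf
        obtain ⟨w, hw⟩ := hfs (e.symm t)
        obtain ⟨x, hx⟩ := soc.mkQ_surjective w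
        refine ⟨x, ?_⟩
        rw [hΨdef]
        simp only [LinearMap.comp_apply, LinearEquiv.coe_coe]
        rw [hx, hw, e.apply_symm_apply]
      · intro W' hW'
        intro x hx
        have hle' : W' ≤ soc :=
          le_sSup (show W' ∈ {m : Submodule R R | IsSimpleModule R m} from hW')
        have hxsoc : x ∈ soc := hle' hx
        rw [LinearMap.mem_ker, hΨdef]
        simp only [LinearMap.comp_apply, LinearEquiv.coe_coe, Submodule.mkQ_apply]
        rw [(Submodule.Quotient.mk_eq_zero soc).mpr hxsoc, map_zero, map_zero]
  tfae_finish
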